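/- Let x̃₁, x̃₂ be complex numbers and a ≠ 0. Then |a|·‖(0, |x̃₁| + |x̃₂|, |x̃₁x̃₂|)‖₂ ≤ √3·‖(a, a(x̃₁ + x̃₂), a·x̃₁x̃₂)‖₂. -/

import Mathlib

theorem stmt_15 (a xt₁ xt₂ : ℂ) (ha : a ≠ 0) :
    ‖a‖ *
        Real.sqrt ((‖xt₁‖ + ‖xt₂‖)^2 + (‖xt₁ * xt₂‖)^2) ≤
      Real.sqrt 3 *
        Real.sqrt ((‖a‖)^2 + (‖a * (xt₁ + xt₂)‖)^2 +
          (‖a * (xt₁ * xt₂)‖)^2) := by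
  set A := ‖a‖ with hA
  set r₁ := ‖xt₁‖ with hr₁
  set r₂ := ‖xt₂‖ with hr₂
  set s := ‖xt₁ + xt₂‖ with hs
  have hp : ‖xt₁ * xt₂‖ = r₁ * r₂ := norm_mul _ _
  have hm1 : ‖a * (xt₁ + xt₂)‖ = A * s := norm_mul _ _
  have hm2 : ‖a * (xt₁ * xt₂)‖ = A * (r₁ * r₂) := by
    rw [norm_mul, hp]
  have hA0 : 0 ≤ A := norm_nonneg a
  have h1 : r₁ ≤ s + r₂ := by
    have := norm_add_le (xt₁ + xt₂) (-xt₂)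
    simpa [norm_neg] using this
  have h2 : r₂ ≤ s + r₁ := by
    have := norm_add_le (xt₁ + xt₂) (-xt₁)
    have h' : xt₁ + xt₂ + -xt₁ = xt₂ := by ring
    rw [h'] at this
    simpa [norm_neg] using this
  have hr₁0 : 0 ≤ r₁ := norm_nonneg _
  have hr₂0 : 0 ≤ r₂ := norm_nonneg _
  have hs0 : 0 ≤ s := norm_nonneg _
  rw [hp, hm1, hm2]
  have hinner : 0 ≤ (r₁ + r₂)^2 + (r₁*r₂)^2 := by positivity
  conv_lhs => rw [← Real.sqrt_sq hA0]
  rw [← Real.sqrt_mul (sq_nonneg A), ← Real.sqrt_mul (by norm_num : (0:ℝ) ≤ 3)]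
  apply Real.sqrt_le_sqrt
  have key : (r₁ + r₂)^2 + (r₁*r₂)^2 ≤ 3 * (1 + s^2 + (r₁*r₂)^2) := by
    nlinarith [sq_nonneg (r₁ - r₂), sq_nonneg (r₁*r₂ - 1), sq_nonneg s,
      mul_nonneg hr₁0 hr₂0]
  have hA2 : 0 ≤ A^2 := sq_nonneg A
  calc A^2 * ((r₁ + r₂)^2 + (r₁*r₂)^2)
      ≤ A^2 * (3 * (1 + s^2 + (r₁*r₂)^2)) := by
        exact mul_le_mul_of_nonneg_left key hA2
    _ = 3 * (A^2 + (A*s)^2 + (A*(r₁*r₂))^2) := by ring
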